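/- Let (Ω, P), 𝒞, Γ(·) and x : 𝒞 → (0,1) satisfy the hypotheses of the general Lovász Local Lemma: for each C ∈ 𝒞 and every subset S ⊆ 𝒞 \ ({C} ∪ Γ(C)), P[C ∩ ⋂_{D∈S} Dᶜ] = P[C]·P[⋂_{D∈S} Dᶜ], and P[C] ≤ x(C)·∏_{D∈Γ(C)}(1 − x(D)) for all C ∈ 𝒞 (so that P[⋂_{C∈𝒞} Cᶜ] > 0 and the conditional measure μ_S[·] := P[· | ⋂_{C∈𝒞} Cᶜ] is well-defined). Let B be any event and let Γ(B) ⊆ 𝒞 be a set such that for every subset S ⊆ 𝒞 \ Γ(B), P[B ∩ ⋂_{D∈S} Dᶜ] = P[B]·P[⋂_{D∈S} Dᶜ]. Then μ_S[B] ≤ P[B] · ∏_{C∈Γ(B)} (1 − x(C))^{−1}. -/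

import Mathlib

open MeasureTheory Finset


section aux
variable {Ω : Type*} [MeasurableSpace Ω] (P : Measure Ω) [IsProbabilityMeasure P]
  {ι : Type*} [DecidableEq ι] (A : ι → Set Ω) (x : ι → ℝ) (Γ : ι → Finset ι)

lemma lll_split (hA : ∀ i, MeasurableSet (A i)) (k : ι) (U : Finset ι) :
    (P (⋂ j ∈ insert k U, (A j)ᶜ)).toReal
      = (P (⋂ j ∈ U, (A j)ᶜ)).toReal - (P (A k ∩ ⋂ j ∈ U, (A j)ᶜ)).toReal := by
  set X := ⋂ j ∈ U, (A j)ᶜ with hX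
  have h1 : (⋂ j ∈ insert k U, (A j)ᶜ) = X \ A k := by
    ext z
    simp only [Set.mem_iInter, Finset.mem_insert, Set.mem_diff, Set.mem_compl_iff, hX]
    constructor
    · intro h
      exact ⟨fun j hj => h j (Or.inr hj), h k (Or.inl rfl)⟩
    · rintro ⟨h1, h2⟩ j (rfl | hj)
      · exact h2
      · exact h1 j hj
  have h2 : P (X ∩ A k) + P (X \ A k) = P X := measure_inter_add_diff X (hA k)
  have h3 : A k ∩ X = X ∩ A k := Set.inter_comm _ _
  have hfin1 : P (X ∩ A k) ≠ ⊤ := measure_ne_top _ _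
  have hfin2 : P (X \ A k) ≠ ⊤ := measure_ne_top _ _
  rw [h1, h3]
  have := congrArg ENNReal.toReal h2
  rw [ENNReal.toReal_add hfin1 hfin2] at this
  linarith

lemma lll_main (hA : ∀ i, MeasurableSet (A i))
    (hind : ∀ i, ∀ S : Finset ι, (∀ j ∈ S, j ≠ i ∧ j ∉ Γ i) →
      P (A i ∩ ⋂ j ∈ S, (A j)ᶜ) = P (A i) * P (⋂ j ∈ S, (A j)ᶜ))
    (hx : ∀ i, x i ∈ Set.Ioo (0:ℝ) 1)
    (hcond : ∀ i, (P (A i)).toReal ≤ x i * ∏ j ∈ Γ i, (1 - x j)) :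
    ∀ n : ℕ, ∀ S : Finset ι, S.card ≤ n → ∀ i,
      (P (A i ∩ ⋂ j ∈ S, (A j)ᶜ)).toReal ≤ x i * (P (⋂ j ∈ S, (A j)ᶜ)).toReal := by
  intro n
  induction n with
  | zero =>
    intro S hcard i
    have hS : S = ∅ := Finset.card_eq_zero.mp (Nat.le_zero.mp hcard)
    subst hS
    simp only [Finset.notMem_empty, Set.iInter_of_empty, Set.iInter_univ, Set.inter_univ]
    have hprod : ∏ j ∈ Γ i, (1 - x j) ≤ 1 :=
      Finset.prod_le_one (fun j _ => by linarith [(hx j).2]) (fun j _ => by linarith [(hx j).1])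
    have := hcond i
    have hxi := (hx i).1
    have : (P (A i)).toReal ≤ x i := by nlinarith
    simpa using this
  | succ n ih =>
    intro S hcard i
    rcases Nat.lt_or_ge S.card (n+1) with h | h
    · exact ih S (Nat.lt_succ_iff.mp h) i
    have hcardS : S.card = n + 1 := le_antisymm hcard h
    by_cases hi : i ∈ S
    · have hsub : A i ∩ ⋂ j ∈ S, (A j)ᶜ ⊆ ∅ := by
        intro z hz
        have h1 : z ∈ A i := hz.1
        have h2 : z ∈ (A i)ᶜ := by
          have := hz.2
          simp only [Set.mem_iInter] at this
          exact this i hi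
        exact h2 h1
      have : P (A i ∩ ⋂ j ∈ S, (A j)ᶜ) = 0 :=
        measure_mono_null hsub measure_empty
      rw [this]
      simp only [ENNReal.toReal_zero]
      exact mul_nonneg (hx i).1.le ENNReal.toReal_nonneg
    · set S₁ := S ∩ Γ i with hS₁
      set S₂ := S \ Γ i with hS₂
      have hunion : S₂ ∪ S₁ = S := Finset.sdiff_union_inter S (Γ i)
      have key : ∀ T : Finset ι, T ⊆ S₁ →
          (∏ j ∈ T, (1 - x j)) * (P (⋂ j ∈ S₂, (A j)ᶜ)).toReal
            ≤ (P (⋂ j ∈ S₂ ∪ T, (A j)ᶜ)).toReal := by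
        intro T
        induction T using Finset.induction_on with
        | empty => simp
        | @insert k T hk ihT =>
          intro hsub
          have hkS₁ : k ∈ S₁ := hsub (Finset.mem_insert_self k T)
          have hTsub : T ⊆ S₁ := fun a ha => hsub (Finset.mem_insert_of_mem ha)
          have hkS : k ∈ S := (Finset.mem_inter.mp hkS₁).1
          have hknot : k ∉ S₂ ∪ T := by
            simp only [Finset.mem_union]
            rintro (h' | h')
            · exact (Finset.mem_sdiff.mp h').2 (Finset.mem_inter.mp hkS₁).2
            · exact hk h'
          have hsubS : S₂ ∪ T ⊆ S := by
            apply Finset.union_subset (Finset.sdiff_subset)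
            exact hTsub.trans (Finset.inter_subset_left)
          have hcardU : (S₂ ∪ T).card ≤ n := by
            have h1 : S₂ ∪ T ⊆ S.erase k := Finset.subset_erase.mpr ⟨hsubS, hknot⟩
            have h2 := Finset.card_le_card h1
            rw [Finset.card_erase_of_mem hkS, hcardS] at h2
            simpa using h2
          have hmain := ih (S₂ ∪ T) hcardU k
          have hrw : S₂ ∪ insert k T = insert k (S₂ ∪ T) := by
            ext a; simp only [Finset.mem_union, Finset.mem_insert]; tauto
          rw [hrw, lll_split P A hA k (S₂ ∪ T)]
          have hstep : (1 - x k) * (P (⋂ j ∈ S₂ ∪ T, (A j)ᶜ)).toReal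
              ≤ (P (⋂ j ∈ S₂ ∪ T, (A j)ᶜ)).toReal - (P (A k ∩ ⋂ j ∈ S₂ ∪ T, (A j)ᶜ)).toReal := by
            nlinarith [ENNReal.toReal_nonneg (a := P (⋂ j ∈ S₂ ∪ T, (A j)ᶜ))]
          have hchain := ihT hTsub
          rw [Finset.prod_insert hk]
          have h1xk : (0:ℝ) ≤ 1 - x k := by linarith [(hx k).2]
          calc ((1 - x k) * ∏ j ∈ T, (1 - x j)) * (P (⋂ j ∈ S₂, (A j)ᶜ)).toReal
              ≤ (1 - x k) * (P (⋂ j ∈ S₂ ∪ T, (A j)ᶜ)).toReal := by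
                rw [mul_assoc]
                exact mul_le_mul_of_nonneg_left hchain h1xk
            _ ≤ _ := hstep
      -- now the main estimate
      have hS₂sub : ∀ j ∈ S₂, j ≠ i ∧ j ∉ Γ i := by
        intro j hj
        have hj' := Finset.mem_sdiff.mp hj
        exact ⟨fun hji => hi (hji ▸ hj'.1), hj'.2⟩
      have hstep1 : (P (A i ∩ ⋂ j ∈ S, (A j)ᶜ)).toReal
          ≤ (P (A i ∩ ⋂ j ∈ S₂, (A j)ᶜ)).toReal := by
        apply ENNReal.toReal_mono (measure_ne_top _ _)
        apply measure_mono
        apply Set.inter_subset_inter_right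
        intro z hz
        simp only [Set.mem_iInter] at hz ⊢
        intro j hj
        exact hz j ((Finset.sdiff_subset) hj)
      have hstep2 : (P (A i ∩ ⋂ j ∈ S₂, (A j)ᶜ)).toReal
          = (P (A i)).toReal * (P (⋂ j ∈ S₂, (A j)ᶜ)).toReal := by
        rw [hind i S₂ hS₂sub, ENNReal.toReal_mul]
      have hprodsplit : ∏ j ∈ Γ i, (1 - x j) = (∏ j ∈ S₁, (1 - x j)) * ∏ j ∈ Γ i \ S₁, (1 - x j) := by
        rw [mul_comm, Finset.prod_sdiff (Finset.inter_subset_right)]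
      have hprod2 : ∏ j ∈ Γ i \ S₁, (1 - x j) ≤ 1 :=
        Finset.prod_le_one (fun j _ => by linarith [(hx j).2]) (fun j _ => by linarith [(hx j).1])
      have hprod1pos : (0:ℝ) ≤ ∏ j ∈ S₁, (1 - x j) :=
        Finset.prod_nonneg (fun j _ => by linarith [(hx j).2])
      have hfS₂ : (0:ℝ) ≤ (P (⋂ j ∈ S₂, (A j)ᶜ)).toReal := ENNReal.toReal_nonneg
      have hkey := key S₁ le_rfl
      rw [hunion] at hkey
      have hxi := (hx i).1
      calc (P (A i ∩ ⋂ j ∈ S, (A j)ᶜ)).toReal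
          ≤ (P (A i)).toReal * (P (⋂ j ∈ S₂, (A j)ᶜ)).toReal := hstep1.trans hstep2.le
        _ ≤ (x i * ∏ j ∈ Γ i, (1 - x j)) * (P (⋂ j ∈ S₂, (A j)ᶜ)).toReal :=
            mul_le_mul_of_nonneg_right (hcond i) hfS₂
        _ ≤ (x i * ∏ j ∈ S₁, (1 - x j)) * (P (⋂ j ∈ S₂, (A j)ᶜ)).toReal := by
            apply mul_le_mul_of_nonneg_right _ hfS₂
            apply mul_le_mul_of_nonneg_left _ hxi.le
            rw [hprodsplit]
            have hnn : (0:ℝ) ≤ ∏ j ∈ Γ i \ S₁, (1 - x j) :=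
              Finset.prod_nonneg (fun j _ => sub_nonneg.mpr (hx j).2.le)
            nlinarith
        _ = x i * ((∏ j ∈ S₁, (1 - x j)) * (P (⋂ j ∈ S₂, (A j)ᶜ)).toReal) := by ring
        _ ≤ x i * (P (⋂ j ∈ S, (A j)ᶜ)).toReal := mul_le_mul_of_nonneg_left hkey hxi.le

lemma lll_chain (hA : ∀ i, MeasurableSet (A i))
    (hind : ∀ i, ∀ S : Finset ι, (∀ j ∈ S, j ≠ i ∧ j ∉ Γ i) →
      P (A i ∩ ⋂ j ∈ S, (A j)ᶜ) = P (A i) * P (⋂ j ∈ S, (A j)ᶜ))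
    (hx : ∀ i, x i ∈ Set.Ioo (0:ℝ) 1)
    (hcond : ∀ i, (P (A i)).toReal ≤ x i * ∏ j ∈ Γ i, (1 - x j)) :
    ∀ T U : Finset ι, Disjoint T U →
      (∏ j ∈ T, (1 - x j)) * (P (⋂ j ∈ U, (A j)ᶜ)).toReal
        ≤ (P (⋂ j ∈ U ∪ T, (A j)ᶜ)).toReal := by
  intro T
  induction T using Finset.induction_on with
  | empty => simp
  | @insert k T hk ihT =>
    intro U hdisj
    have hdisj' : Disjoint T U := by
      apply Finset.disjoint_left.mpr
      intro a ha hau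
      exact Finset.disjoint_left.mp hdisj (Finset.mem_insert_of_mem ha) hau
    have hkU : k ∉ U := Finset.disjoint_left.mp hdisj (Finset.mem_insert_self k T)
    have hrw : U ∪ insert k T = insert k (U ∪ T) := by
      ext a; simp only [Finset.mem_union, Finset.mem_insert]; tauto
    rw [hrw, lll_split P A hA k (U ∪ T), Finset.prod_insert hk]
    have hmain := lll_main P A x Γ hA hind hx hcond (U ∪ T).card (U ∪ T) le_rfl k
    have hchain := ihT U hdisj'
    have h1xk : (0:ℝ) ≤ 1 - x k := by linarith [(hx k).2]
    calc ((1 - x k) * ∏ j ∈ T, (1 - x j)) * (P (⋂ j ∈ U, (A j)ᶜ)).toReal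
        ≤ (1 - x k) * (P (⋂ j ∈ U ∪ T, (A j)ᶜ)).toReal := by
          rw [mul_assoc]
          exact mul_le_mul_of_nonneg_left hchain h1xk
      _ ≤ _ := by nlinarith [ENNReal.toReal_nonneg (a := P (⋂ j ∈ U ∪ T, (A j)ᶜ))]

end aux

/-- **Comparison of the LLL distribution with the underlying measure** (Haeupler–Saha–Srinivasan).
Under the hypotheses of the general Lovász Local Lemma for the events `A i` (so that the
conditional measure `μ_S[·] = P[· | ⋂ i, (A i)ᶜ]` is well-defined), if `B` is an event and
`ΓB` is a set of indices such that `B` is mutually independent of the events outside `ΓB`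
(in the sense of the product identity below), then
`μ_S[B] ≤ P[B] · ∏_{j ∈ ΓB} (1 - x j)⁻¹`. -/
theorem lll_distribution_comparison
    {Ω : Type*} [MeasurableSpace Ω] (P : Measure Ω) [IsProbabilityMeasure P]
    {ι : Type*} [Fintype ι] [DecidableEq ι]
    (A : ι → Set Ω) (hA : ∀ i, MeasurableSet (A i))
    (Γ : ι → Finset ι) (hΓ : ∀ i, i ∉ Γ i)
    (hind : ∀ i, ∀ S : Finset ι, (∀ j ∈ S, j ≠ i ∧ j ∉ Γ i) →
      P (A i ∩ ⋂ j ∈ S, (A j)ᶜ) = P (A i) * P (⋂ j ∈ S, (A j)ᶜ))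
    (x : ι → ℝ) (hx : ∀ i, x i ∈ Set.Ioo (0 : ℝ) 1)
    (hcond : ∀ i, (P (A i)).toReal ≤ x i * ∏ j ∈ Γ i, (1 - x j))
    (B : Set Ω) (hB : MeasurableSet B) (ΓB : Finset ι)
    (hindB : ∀ S : Finset ι, (∀ j ∈ S, j ∉ ΓB) →
      P (B ∩ ⋂ j ∈ S, (A j)ᶜ) = P B * P (⋂ j ∈ S, (A j)ᶜ)) :
    (P (B ∩ ⋂ i, (A i)ᶜ)).toReal / (P (⋂ i, (A i)ᶜ)).toReal
      ≤ (P B).toReal * ∏ j ∈ ΓB, (1 - x j)⁻¹ := by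
  classical
  set S₂ := (Finset.univ : Finset ι) \ ΓB with hS₂def
  have hxpos : ∀ j, (0:ℝ) < 1 - x j := fun j => by linarith [(hx j).2]
  have hpos : ∀ S : Finset ι, 0 < (P (⋂ j ∈ S, (A j)ᶜ)).toReal := by
    intro S
    have h := lll_chain P A x Γ hA hind hx hcond S ∅ (Finset.disjoint_empty_right S)
    simp only [Finset.notMem_empty, Set.iInter_of_empty, Set.iInter_univ,
      Finset.empty_union] at h
    have hμ : (P (Set.univ : Set Ω)).toReal = 1 := by simp
    rw [hμ, mul_one] at h
    exact lt_of_lt_of_le (Finset.prod_pos (fun j _ => hxpos j)) h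
  have hEq : (⋂ i, (A i)ᶜ) = ⋂ j ∈ (Finset.univ : Finset ι), (A j)ᶜ := by
    ext z; simp
  have hnum : (P (B ∩ ⋂ i, (A i)ᶜ)).toReal
      ≤ (P B).toReal * (P (⋂ j ∈ S₂, (A j)ᶜ)).toReal := by
    have h1 : (B ∩ ⋂ i, (A i)ᶜ) ⊆ B ∩ ⋂ j ∈ S₂, (A j)ᶜ := by
      apply Set.inter_subset_inter_right
      intro z hz
      simp only [Set.mem_iInter] at hz ⊢
      intro j _
      exact hz j
    calc (P (B ∩ ⋂ i, (A i)ᶜ)).toReal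
        ≤ (P (B ∩ ⋂ j ∈ S₂, (A j)ᶜ)).toReal :=
          ENNReal.toReal_mono (measure_ne_top _ _) (measure_mono h1)
      _ = (P B).toReal * (P (⋂ j ∈ S₂, (A j)ᶜ)).toReal := by
          rw [hindB S₂ (fun j hj => (Finset.mem_sdiff.mp hj).2), ENNReal.toReal_mul]
  have hden := lll_chain P A x Γ hA hind hx hcond ΓB S₂
    (by rw [hS₂def]; exact Finset.disjoint_sdiff)
  have hUnion : S₂ ∪ ΓB = Finset.univ := Finset.sdiff_union_of_subset (Finset.subset_univ ΓB)
  rw [hUnion] at hden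
  have hposU : 0 < (P (⋂ i, (A i)ᶜ)).toReal := by rw [hEq]; exact hpos _
  have hdenU : (∏ j ∈ ΓB, (1 - x j)) * (P (⋂ j ∈ S₂, (A j)ᶜ)).toReal
      ≤ (P (⋂ i, (A i)ᶜ)).toReal := by rw [hEq]; exact hden
  rw [div_le_iff₀ hposU]
  have hprodpos : (0:ℝ) < ∏ j ∈ ΓB, (1 - x j) := Finset.prod_pos (fun j _ => hxpos j)
  have hinv : ∏ j ∈ ΓB, (1 - x j)⁻¹ = (∏ j ∈ ΓB, (1 - x j))⁻¹ := Finset.prod_inv_distrib _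
  have hPB : (0:ℝ) ≤ (P B).toReal := ENNReal.toReal_nonneg
  calc (P (B ∩ ⋂ i, (A i)ᶜ)).toReal
      ≤ (P B).toReal * (P (⋂ j ∈ S₂, (A j)ᶜ)).toReal := hnum
    _ = ((P B).toReal * (∏ j ∈ ΓB, (1 - x j))⁻¹)
          * ((∏ j ∈ ΓB, (1 - x j)) * (P (⋂ j ∈ S₂, (A j)ᶜ)).toReal) := by
        rw [mul_assoc, ← mul_assoc ((∏ j ∈ ΓB, (1 - x j))⁻¹),
          inv_mul_cancel₀ hprodpos.ne', one_mul]
    _ ≤ ((P B).toReal * ∏ j ∈ ΓB, (1 - x j)⁻¹) * (P (⋂ i, (A i)ᶜ)).toReal := by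
        rw [hinv]
        exact mul_le_mul_of_nonneg_left hdenU
          (mul_nonneg hPB (inv_nonneg.mpr hprodpos.le))
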